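/- In the group Γ_{2k-1}, the element [x,y] lies in the intersection of all finite terms of the lower central series (the ω-term (Γ_{2k-1})_ω), and moreover (Γ_{2k-1})_ω equals the central cyclic subgroup of order (2k-1)² generated by [x,y], while (Γ_{2k-1})_{ω+1} = [Γ_{2k-1}, (Γ_{2k-1})_ω] is trivial. -/

import Mathlib

open scoped commutatorElement

inductive Gen : Type
  | x | y | t

open FreeGroup in
/-- Relations of `Γ_m = ⟨x, y, t | [x,y]^(m²), [[x,y],x], [[x,y],y],
t x t⁻¹ = x⁻¹, t y t⁻¹ = y⁻¹⟩` (with `m = 2k-1`). -/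
def gammaRelsM (m : ℕ) : Set (FreeGroup Gen) :=
  { ⁅of Gen.x, of Gen.y⁆ ^ (m ^ 2),
    ⁅⁅of Gen.x, of Gen.y⁆, of Gen.x⁆,
    ⁅⁅of Gen.x, of Gen.y⁆, of Gen.y⁆,
    of Gen.t * of Gen.x * (of Gen.t)⁻¹ * of Gen.x,
    of Gen.t * of Gen.y * (of Gen.t)⁻¹ * of Gen.y }

/-- The group `Γ_{2k-1}`. -/
abbrev GammaM (m : ℕ) := PresentedGroup (gammaRelsM m)

/-- The image of the commutator `⁅x,y⁆` in `Γ_m`. -/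
def cM (m : ℕ) : GammaM m :=
  ⁅PresentedGroup.of (rels := gammaRelsM m) Gen.x,
   PresentedGroup.of (rels := gammaRelsM m) Gen.y⁆

def epsZ (d : ℤ) : ℤ := (((-1 : ℤˣ) ^ d : ℤˣ) : ℤ)

@[simp] lemma epsZ_zero : epsZ 0 = 1 := rfl
lemma epsZ_add (d e : ℤ) : epsZ (d + e) = epsZ d * epsZ e := by
  simp [epsZ, zpow_add]
@[simp] lemma epsZ_mul_self (d : ℤ) : epsZ d * epsZ d = 1 := by
  have : ((-1 : ℤˣ) ^ d) * ((-1 : ℤˣ) ^ d) = 1 := by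
    rw [← sq]
    exact Int.units_sq _
  simp [epsZ, ← Units.val_mul, this]
@[simp] lemma epsZ_neg (d : ℤ) : epsZ (-d) = epsZ d := by
  simp [epsZ, zpow_neg]
@[simp] lemma epsZ_one : epsZ 1 = -1 := rfl

@[ext] structure QZ : Type where
  a : ℤ
  b : ℤ
  d : ℤ

namespace QZ

instance : Mul QZ := ⟨fun g h => ⟨g.a + epsZ g.d * h.a, g.b + epsZ g.d * h.b, g.d + h.d⟩⟩
instance : One QZ := ⟨⟨0, 0, 0⟩⟩
instance : Inv QZ := ⟨fun g => ⟨-(epsZ g.d * g.a), -(epsZ g.d * g.b), -g.d⟩⟩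

@[simp] lemma mul_a (g h : QZ) : (g * h).a = g.a + epsZ g.d * h.a := rfl
@[simp] lemma mul_b (g h : QZ) : (g * h).b = g.b + epsZ g.d * h.b := rfl
@[simp] lemma mul_d (g h : QZ) : (g * h).d = g.d + h.d := rfl
@[simp] lemma one_a : (1 : QZ).a = 0 := rfl
@[simp] lemma one_b : (1 : QZ).b = 0 := rfl
@[simp] lemma one_d : (1 : QZ).d = 0 := rfl
@[simp] lemma inv_a (g : QZ) : (g⁻¹).a = -(epsZ g.d * g.a) := rfl
@[simp] lemma inv_b (g : QZ) : (g⁻¹).b = -(epsZ g.d * g.b) := rfl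
@[simp] lemma inv_d (g : QZ) : (g⁻¹).d = -g.d := rfl

instance : Group QZ where
  mul_assoc g h k := by
    ext <;> simp [epsZ_add] <;> ring
  one_mul g := by ext <;> simp
  mul_one g := by ext <;> simp
  inv_mul_cancel g := by
    ext <;> simp [mul_comm]

end QZ

/-- Value of a unit of ℤ in `ZMod n`. -/
def evU (n : ℕ) (e : ℤˣ) : ZMod n := ((e : ℤ) : ZMod n)

@[simp] lemma evU_one (n : ℕ) : evU n 1 = 1 := by simp [evU]
@[simp] lemma evU_mul_self (n : ℕ) (e : ℤˣ) : evU n e * evU n e = 1 := by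
  simp [evU, ← Int.cast_mul, Int.units_mul_self]

/-- The "flipped Heisenberg" group over `ZMod n`. -/
@[ext] structure HZ (n : ℕ) : Type where
  a : ZMod n
  b : ZMod n
  c : ZMod n
  e : ℤˣ

namespace HZ

variable {n : ℕ}

instance : Mul (HZ n) :=
  ⟨fun g h => ⟨g.a + evU n g.e * h.a, g.b + evU n g.e * h.b,
    g.c + h.c + g.a * (evU n g.e * h.b), g.e * h.e⟩⟩
instance : One (HZ n) := ⟨⟨0, 0, 0, 1⟩⟩
instance : Inv (HZ n) :=
  ⟨fun g => ⟨-(evU n g.e * g.a), -(evU n g.e * g.b), g.a * g.b - g.c, g.e⟩⟩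

@[simp] lemma mul_a (g h : HZ n) : (g * h).a = g.a + evU n g.e * h.a := rfl
@[simp] lemma mul_b (g h : HZ n) : (g * h).b = g.b + evU n g.e * h.b := rfl
@[simp] lemma mul_c (g h : HZ n) : (g * h).c = g.c + h.c + g.a * (evU n g.e * h.b) := rfl
@[simp] lemma mul_e (g h : HZ n) : (g * h).e = g.e * h.e := rfl
@[simp] lemma one_a : (1 : HZ n).a = 0 := rfl
@[simp] lemma one_b : (1 : HZ n).b = 0 := rfl
@[simp] lemma one_c : (1 : HZ n).c = 0 := rfl
@[simp] lemma one_e : (1 : HZ n).e = 1 := rfl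
@[simp] lemma inv_a (g : HZ n) : (g⁻¹).a = -(evU n g.e * g.a) := rfl
@[simp] lemma inv_b (g : HZ n) : (g⁻¹).b = -(evU n g.e * g.b) := rfl
@[simp] lemma inv_c (g : HZ n) : (g⁻¹).c = g.a * g.b - g.c := rfl
@[simp] lemma inv_e (g : HZ n) : (g⁻¹).e = g.e := rfl

lemma evsq (e : ℤˣ) (z : ZMod n) : evU n e * (evU n e * z) = z := by
  rw [← mul_assoc, evU_mul_self, one_mul]

lemma evsq' (e : ℤˣ) : (evU n e) ^ 2 = 1 := by rw [sq]; exact evU_mul_self n e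

instance : Group (HZ n) where
  mul_assoc g h k := by
    have h1 := evsq' (n := n) g.e
    have h2 := evsq' (n := n) h.e
    ext <;> simp only [mul_a, mul_b, mul_c, mul_e, evU, Units.val_mul, Int.cast_mul] <;>
      ring_nf <;> simp only [evU] at h1 h2 <;> rw [h1] <;> ring
  one_mul g := by ext <;> simp
  mul_one g := by ext <;> simp
  inv_mul_cancel g := by
    have h1 := evsq' (n := n) g.e
    ext <;> simp [evsq] <;> ring_nf <;> rw [h1] <;> ring

end HZ

namespace HZ

/-- The central embedding of `ZMod n` into `HZ n`. -/
def zeta (n : ℕ) : Multiplicative (ZMod n) →* HZ n where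
  toFun z := ⟨0, 0, z.toAdd, 1⟩
  map_one' := by ext <;> simp
  map_mul' z w := by ext <;> simp

lemma zeta_injective (n : ℕ) : Function.Injective (zeta n) := by
  intro z w h
  have : (zeta n z).c = (zeta n w).c := by rw [h]
  simpa [zeta] using this

lemma orderOf_central (n : ℕ) : orderOf (⟨0, 0, 1, 1⟩ : HZ n) = n := by
  have : (⟨0, 0, 1, 1⟩ : HZ n) = zeta n (Multiplicative.ofAdd 1) := rfl
  rw [this, orderOf_injective (zeta n) (zeta_injective n),
    orderOf_ofAdd_eq_addOrderOf, ZMod.addOrderOf_one]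

end HZ
lemma epsZ_succ (d : ℤ) : epsZ (d + 1) = -epsZ d := by
  rw [epsZ_add, epsZ_one]; ring
lemma epsZ_pred (d : ℤ) : epsZ (d - 1) = -epsZ d := by
  rw [sub_eq_add_neg, epsZ_add, epsZ_neg, epsZ_one]; ring

section TConj
variable {G : Type*} [Group G] {t a : G}

lemma t_conj_zpow (h : t * a * t⁻¹ = a⁻¹) (n : ℤ) : t * a ^ n * t⁻¹ = a ^ (-n) := by
  rw [← conj_zpow, h, inv_zpow, zpow_neg]

lemma t_inv_conj_zpow (h : t * a * t⁻¹ = a⁻¹) (n : ℤ) : t⁻¹ * a ^ n * t = a ^ (-n) := by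
  have h2 := t_conj_zpow h (-n)
  rw [neg_neg] at h2
  rw [← h2]; group

lemma t_zpow_conj_zpow (h : t * a * t⁻¹ = a⁻¹) (d n : ℤ) :
    t ^ d * a ^ n * t ^ (-d) = a ^ (epsZ d * n) := by
  induction d using Int.induction_on with
  | zero => simp
  | succ i ih =>
      calc t ^ ((i : ℤ) + 1) * a ^ n * t ^ (-((i : ℤ) + 1))
          = t * (t ^ (i : ℤ) * a ^ n * t ^ (-(i : ℤ))) * t⁻¹ := by group
        _ = t * a ^ (epsZ (i : ℤ) * n) * t⁻¹ := by rw [ih]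
        _ = a ^ (-(epsZ (i : ℤ) * n)) := t_conj_zpow h _
        _ = a ^ (epsZ ((i : ℤ) + 1) * n) := by rw [epsZ_succ]; ring_nf
  | pred i ih =>
      calc t ^ (-(i : ℤ) - 1) * a ^ n * t ^ (-(-(i : ℤ) - 1))
          = t⁻¹ * (t ^ (-(i : ℤ)) * a ^ n * t ^ (-(-(i : ℤ)))) * t := by group
        _ = t⁻¹ * a ^ (epsZ (-(i : ℤ)) * n) * t := by rw [ih]
        _ = a ^ (-(epsZ (-(i : ℤ)) * n)) := t_inv_conj_zpow h _
        _ = a ^ (epsZ (-(i : ℤ) - 1) * n) := by rw [epsZ_pred, epsZ_neg]; ring_nf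

lemma t_zpow_swap_zpow (h : t * a * t⁻¹ = a⁻¹) (d n : ℤ) :
    t ^ d * a ^ n = a ^ (epsZ d * n) * t ^ d := by
  have h2 := t_zpow_conj_zpow h d n
  rw [← h2]; group

end TConj

section Swap
variable {G : Type*} [Group G] {x y c : G}

lemma central_conj_zpow (hcx : Commute c x) (j : ℤ) : x * c ^ j * x⁻¹ = c ^ j := by
  rw [← (hcx.zpow_left j).eq, mul_inv_cancel_right]

lemma conj_y (hc : ⁅x, y⁆ = c) (hcy : Commute c y) : x * y * x⁻¹ = y * c := by
  rw [← hcy.eq, ← hc]; group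

lemma conj_y_zpow (hc : ⁅x, y⁆ = c) (hcy : Commute c y) (b : ℤ) :
    x * y ^ b * x⁻¹ = y ^ b * c ^ b := by
  rw [← hcy.symm.mul_zpow, ← conj_y hc hcy, conj_zpow]

lemma conj_y_inv (hc : ⁅x, y⁆ = c) (hcx : Commute c x) (hcy : Commute c y) :
    x⁻¹ * y * x = y * c⁻¹ := by
  have h : x⁻¹ * y * x * c = y := by
    calc x⁻¹ * y * x * c = x⁻¹ * (y * (x * c)) := by group
    _ = x⁻¹ * (y * (c * x)) := by rw [hcx.eq]
    _ = x⁻¹ * ((y * c) * x) := by group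
    _ = x⁻¹ * ((x * y * x⁻¹) * x) := by rw [conj_y hc hcy]
    _ = y := by group
  rw [eq_mul_inv_iff_mul_eq]; exact h

lemma comm_inv_left (hc : ⁅x, y⁆ = c) (hcx : Commute c x) (hcy : Commute c y) :
    ⁅x⁻¹, y⁆ = c⁻¹ := by
  rw [commutatorElement_def, inv_inv, conj_y_inv hc hcx hcy, ← hcy.inv_left.eq,
    mul_inv_cancel_right]

lemma conj_y_inv_zpow (hc : ⁅x, y⁆ = c) (hcx : Commute c x) (hcy : Commute c y) (b : ℤ) :
    x⁻¹ * y ^ b * x = y ^ b * c ^ (-b) := by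
  have h := conj_y_zpow (comm_inv_left hc hcx hcy) hcy.inv_left b
  rw [inv_inv, inv_zpow, ← zpow_neg] at h
  exact h

lemma conj_y_zpow_zpow (hc : ⁅x, y⁆ = c) (hcx : Commute c x) (hcy : Commute c y) (a b : ℤ) :
    x ^ a * y ^ b * x ^ (-a) = y ^ b * c ^ (a * b) := by
  induction a using Int.induction_on with
  | zero => simp
  | succ i ih =>
      calc x ^ ((i : ℤ) + 1) * y ^ b * x ^ (-((i : ℤ) + 1))
          = x * (x ^ (i : ℤ) * y ^ b * x ^ (-(i : ℤ))) * x⁻¹ := by group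
        _ = x * (y ^ b * c ^ ((i : ℤ) * b)) * x⁻¹ := by rw [ih]
        _ = (x * y ^ b * x⁻¹) * (x * c ^ ((i : ℤ) * b) * x⁻¹) := by group
        _ = (y ^ b * c ^ b) * c ^ ((i : ℤ) * b) := by
            rw [conj_y_zpow hc hcy, central_conj_zpow hcx]
        _ = y ^ b * c ^ (((i : ℤ) + 1) * b) := by
            rw [mul_assoc, ← zpow_add]; congr 1; ring
  | pred i ih =>
      calc x ^ (-(i : ℤ) - 1) * y ^ b * x ^ (-(-(i : ℤ) - 1))
          = x⁻¹ * (x ^ (-(i : ℤ)) * y ^ b * x ^ (-(-(i : ℤ)))) * x := by group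
        _ = x⁻¹ * (y ^ b * c ^ (-(i : ℤ) * b)) * x := by rw [ih]
        _ = (x⁻¹ * y ^ b * x) * (x⁻¹ * c ^ (-(i : ℤ) * b) * x) := by group
        _ = (y ^ b * c ^ (-b)) * c ^ (-(i : ℤ) * b) := by
            rw [conj_y_inv_zpow hc hcx hcy]
            congr 1
            have := central_conj_zpow hcx.inv_right (x := x⁻¹) (-(i : ℤ) * b)
            rwa [inv_inv] at this
        _ = y ^ b * c ^ ((-(i : ℤ) - 1) * b) := by
            rw [mul_assoc, ← zpow_add]; congr 1; ring

/-- swap form -/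
lemma swap_zpow (hc : ⁅x, y⁆ = c) (hcx : Commute c x) (hcy : Commute c y) (b a : ℤ) :
    y ^ b * x ^ a = x ^ a * y ^ b * c ^ (-(a * b)) := by
  have h := conj_y_zpow_zpow hc hcx hcy a b
  have h2 : x ^ a * y ^ b = y ^ b * c ^ (a * b) * x ^ a := by
    rw [← h]; group
  rw [h2, mul_assoc (y ^ b) (c ^ (a*b)) (x ^ a), (hcx.zpow_zpow (a*b) a).eq]
  group
end Swap

namespace GammaFacts

variable (m : ℕ)

def gX : GammaM m := PresentedGroup.of Gen.x
def gY : GammaM m := PresentedGroup.of Gen.y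
def gT : GammaM m := PresentedGroup.of Gen.t

lemma cM_def : cM m = ⁅gX m, gY m⁆ := rfl

lemma rel_one {r : FreeGroup Gen} (hr : r ∈ gammaRelsM m) :
    PresentedGroup.mk (gammaRelsM m) r = 1 :=
  (QuotientGroup.eq_one_iff _).mpr (Subgroup.subset_normalClosure hr)

lemma relC_pow : (cM m) ^ (m ^ 2) = 1 := by
  have h := rel_one m (Set.mem_insert _ _)
  simp only [map_pow, map_commutatorElement] at h; exact h

lemma relCx : Commute (cM m) (gX m) := by
  have h := rel_one m (Set.mem_insert_of_mem _ (Set.mem_insert _ _))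
  rw [map_commutatorElement, map_commutatorElement] at h
  exact commutatorElement_eq_one_iff_commute.mp h

lemma relCy : Commute (cM m) (gY m) := by
  have h := rel_one m (Set.mem_insert_of_mem _ (Set.mem_insert_of_mem _ (Set.mem_insert _ _)))
  rw [map_commutatorElement, map_commutatorElement] at h
  exact commutatorElement_eq_one_iff_commute.mp h

lemma relTx : gT m * gX m * (gT m)⁻¹ = (gX m)⁻¹ := by
  have h := rel_one m (Set.mem_insert_of_mem _ (Set.mem_insert_of_mem _
    (Set.mem_insert_of_mem _ (Set.mem_insert _ _))))
  simp only [map_mul, map_inv] at h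
  exact mul_eq_one_iff_eq_inv.mp h

lemma relTy : gT m * gY m * (gT m)⁻¹ = (gY m)⁻¹ := by
  have h := rel_one m (Set.mem_insert_of_mem _ (Set.mem_insert_of_mem _
    (Set.mem_insert_of_mem _ (Set.mem_insert_of_mem _ rfl))))
  simp only [map_mul, map_inv] at h
  exact mul_eq_one_iff_eq_inv.mp h

end GammaFacts

lemma comm_flip {G : Type*} [Group G] {x y c : G} (hc : ⁅x, y⁆ = c) : ⁅y, x⁆ = c⁻¹ := by
  rw [← commutatorElement_inv, hc]

lemma comm_inv_inv {G : Type*} [Group G] {x y c : G} (hc : ⁅x, y⁆ = c)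
    (hcx : Commute c x) (hcy : Commute c y) : ⁅x⁻¹, y⁻¹⁆ = c := by
  have h1 : ⁅y, x⁻¹⁆ = c := by rw [comm_flip (comm_inv_left hc hcx hcy), inv_inv]
  have h2 : ⁅y⁻¹, x⁻¹⁆ = c⁻¹ := comm_inv_left h1 hcy hcx.inv_right
  rw [comm_flip h2, inv_inv]

namespace GammaFacts
variable (m : ℕ)

lemma relTc : gT m * cM m * (gT m)⁻¹ = cM m := by
  have h1 : gT m * cM m * (gT m)⁻¹
      = ⁅gT m * gX m * (gT m)⁻¹, gT m * gY m * (gT m)⁻¹⁆ := by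
    rw [cM_def, commutatorElement_def, commutatorElement_def]; group
  rw [h1, relTx, relTy, comm_inv_inv (cM_def m).symm (relCx m) (relCy m)]

lemma commTc : Commute (cM m) (gT m) := by
  have h := relTc m
  rw [mul_inv_eq_iff_eq_mul] at h
  exact h.symm

lemma cM_mem_center : cM m ∈ Subgroup.center (GammaM m) := by
  rw [Subgroup.mem_center_iff]
  intro g
  have hg : g ∈ Subgroup.centralizer {cM m} := by
    apply PresentedGroup.generated_by
    intro j
    rw [Subgroup.mem_centralizer_iff]
    rintro h hh
    rw [Set.mem_singleton_iff] at hh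
    subst hh
    cases j with
    | x => exact (relCx m).eq
    | y => exact (relCy m).eq
    | t => exact (commTc m).eq
  exact (Subgroup.mem_centralizer_iff.mp hg _ rfl).symm

lemma gswap (b a : ℤ) : gY m ^ b * gX m ^ a = gX m ^ a * gY m ^ b * cM m ^ (-(a * b)) :=
  swap_zpow (cM_def m).symm (relCx m) (relCy m) b a

lemma gtX (d a : ℤ) : gT m ^ d * gX m ^ a = gX m ^ (epsZ d * a) * gT m ^ d :=
  t_zpow_swap_zpow (relTx m) d a

lemma gtY (d b : ℤ) : gT m ^ d * gY m ^ b = gY m ^ (epsZ d * b) * gT m ^ d :=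
  t_zpow_swap_zpow (relTy m) d b

lemma gcX (γ a : ℤ) : cM m ^ γ * gX m ^ a = gX m ^ a * cM m ^ γ := ((relCx m).zpow_zpow γ a).eq
lemma gcY (γ b : ℤ) : cM m ^ γ * gY m ^ b = gY m ^ b * cM m ^ γ := ((relCy m).zpow_zpow γ b).eq

lemma NF_mul_x (A B Γ D e : ℤ) :
    (gX m ^ A * gY m ^ B * cM m ^ Γ * gT m ^ D) * gX m ^ e
    = gX m ^ (A + epsZ D * e) * gY m ^ B * cM m ^ (Γ - epsZ D * e * B) * gT m ^ D := by
  calc (gX m ^ A * gY m ^ B * cM m ^ Γ * gT m ^ D) * gX m ^ e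
      = gX m ^ A * gY m ^ B * cM m ^ Γ * (gT m ^ D * gX m ^ e) := by group
    _ = gX m ^ A * gY m ^ B * cM m ^ Γ * (gX m ^ (epsZ D * e) * gT m ^ D) := by rw [gtX]
    _ = gX m ^ A * gY m ^ B * ((cM m ^ Γ * gX m ^ (epsZ D * e)) * gT m ^ D) := by group
    _ = gX m ^ A * gY m ^ B * ((gX m ^ (epsZ D * e) * cM m ^ Γ) * gT m ^ D) := by rw [gcX]
    _ = gX m ^ A * ((gY m ^ B * gX m ^ (epsZ D * e)) * (cM m ^ Γ * gT m ^ D)) := by group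
    _ = gX m ^ A * ((gX m ^ (epsZ D * e) * gY m ^ B * cM m ^ (-(epsZ D * e * B)))
          * (cM m ^ Γ * gT m ^ D)) := by rw [gswap]
    _ = gX m ^ (A + epsZ D * e) * gY m ^ B * cM m ^ (Γ - epsZ D * e * B) * gT m ^ D := by group

lemma NF_mul_y (A B Γ D e : ℤ) :
    (gX m ^ A * gY m ^ B * cM m ^ Γ * gT m ^ D) * gY m ^ e
    = gX m ^ A * gY m ^ (B + epsZ D * e) * cM m ^ Γ * gT m ^ D := by
  calc (gX m ^ A * gY m ^ B * cM m ^ Γ * gT m ^ D) * gY m ^ e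
      = gX m ^ A * gY m ^ B * cM m ^ Γ * (gT m ^ D * gY m ^ e) := by group
    _ = gX m ^ A * gY m ^ B * cM m ^ Γ * (gY m ^ (epsZ D * e) * gT m ^ D) := by rw [gtY]
    _ = gX m ^ A * gY m ^ B * ((cM m ^ Γ * gY m ^ (epsZ D * e)) * gT m ^ D) := by group
    _ = gX m ^ A * gY m ^ B * ((gY m ^ (epsZ D * e) * cM m ^ Γ) * gT m ^ D) := by rw [gcY]
    _ = gX m ^ A * gY m ^ (B + epsZ D * e) * cM m ^ Γ * gT m ^ D := by group

lemma NF_mul_t (A B Γ D e : ℤ) :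
    (gX m ^ A * gY m ^ B * cM m ^ Γ * gT m ^ D) * gT m ^ e
    = gX m ^ A * gY m ^ B * cM m ^ Γ * gT m ^ (D + e) := by group

lemma normal_form (g : GammaM m) : ∃ A B Γ D : ℤ,
    g = gX m ^ A * gY m ^ B * cM m ^ Γ * gT m ^ D := by
  have hg : g ∈ Subgroup.closure (Set.range (PresentedGroup.of : Gen → GammaM m)) := by
    rw [PresentedGroup.closure_range_of]; trivial
  induction hg using Subgroup.closure_induction_right with
  | one => exact ⟨0, 0, 0, 0, by simp⟩
  | mul_right w hw y hy ih =>
      obtain ⟨A, B, Γ, D, rfl⟩ := ih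
      obtain ⟨j, rfl⟩ := hy
      cases j with
      | x => exact ⟨A + epsZ D * 1, B, Γ - epsZ D * 1 * B, D, by
          rw [show (PresentedGroup.of Gen.x : GammaM m) = gX m ^ (1:ℤ) from (zpow_one _).symm,
            NF_mul_x]⟩
      | y => exact ⟨A, B + epsZ D * 1, Γ, D, by
          rw [show (PresentedGroup.of Gen.y : GammaM m) = gY m ^ (1:ℤ) from (zpow_one _).symm,
            NF_mul_y]⟩
      | t => exact ⟨A, B, Γ, D + 1, by
          rw [show (PresentedGroup.of Gen.t : GammaM m) = gT m ^ (1:ℤ) from (zpow_one _).symm,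
            NF_mul_t]⟩
  | mul_inv_cancel w hw y hy ih =>
      obtain ⟨A, B, Γ, D, rfl⟩ := ih
      obtain ⟨j, rfl⟩ := hy
      cases j with
      | x => exact ⟨A + epsZ D * (-1), B, Γ - epsZ D * (-1) * B, D, by
          rw [show (PresentedGroup.of Gen.x : GammaM m)⁻¹ = gX m ^ (-1:ℤ) from
            (zpow_neg_one _).symm, NF_mul_x]⟩
      | y => exact ⟨A, B + epsZ D * (-1), Γ, D, by
          rw [show (PresentedGroup.of Gen.y : GammaM m)⁻¹ = gY m ^ (-1:ℤ) from
            (zpow_neg_one _).symm, NF_mul_y]⟩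
      | t => exact ⟨A, B, Γ, D + (-1), by
          rw [show (PresentedGroup.of Gen.t : GammaM m)⁻¹ = gT m ^ (-1:ℤ) from
            (zpow_neg_one _).symm, NF_mul_t]⟩

end GammaFacts

lemma epsZ_cases (d : ℤ) : epsZ d = 1 ∨ epsZ d = -1 := by
  rcases Int.units_eq_one_or ((-1 : ℤˣ) ^ d) with h | h
  · left; simp [epsZ, h]
  · right; simp [epsZ, h]

lemma int_zero_of_two_pow_dvd {A : ℤ} (h : ∀ n : ℕ, (2:ℤ) ^ n ∣ A) : A = 0 := by
  by_contra hA
  have h1 : (2:ℤ) ^ A.natAbs ≤ |A| :=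
    Int.le_of_dvd (abs_pos.mpr hA) ((dvd_abs _ _).mpr (h A.natAbs))
  have h2 : |A| = (A.natAbs : ℤ) := Int.abs_eq_natAbs A
  have h3 : (A.natAbs : ℤ) < (2:ℤ) ^ A.natAbs := by
    have := Nat.lt_two_pow_self (n := A.natAbs)
    exact_mod_cast this
  omega

namespace GammaFacts
variable (m : ℕ)

lemma xpow_mem (q : ℕ) : gX m ^ ((2:ℤ) ^ q) ∈ (⊤ : Subgroup (GammaM m)).lowerCentralSeries q := by
  induction q with
  | zero => exact Subgroup.mem_top _
  | succ q ih =>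
      have h := t_conj_zpow (relTx m) (-((2:ℤ) ^ q))
      rw [neg_neg] at h
      have key : gX m ^ ((2:ℤ) ^ (q+1)) = ⁅gX m ^ ((2:ℤ) ^ q), gT m⁆ := by
        calc gX m ^ ((2:ℤ) ^ (q+1)) = gX m ^ ((2:ℤ) ^ q) * gX m ^ ((2:ℤ) ^ q) := by
              rw [← zpow_add]; congr 1; ring
          _ = gX m ^ ((2:ℤ) ^ q) * (gT m * gX m ^ (-((2:ℤ) ^ q)) * (gT m)⁻¹) := by rw [h]
          _ = ⁅gX m ^ ((2:ℤ) ^ q), gT m⁆ := by rw [commutatorElement_def]; group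
      rw [key]
      exact Subgroup.commutator_mem_commutator ih (Subgroup.mem_top _)

lemma cpow_mem (q : ℕ) : cM m ^ ((2:ℤ) ^ q) ∈ (⊤ : Subgroup (GammaM m)).lowerCentralSeries (q + 1) := by
  have h := conj_y_zpow_zpow (cM_def m).symm (relCx m) (relCy m) ((2:ℤ) ^ q) 1
  rw [zpow_one, mul_one] at h
  have h2 : gY m * cM m ^ ((2:ℤ) ^ q) * (gY m)⁻¹ = cM m ^ ((2:ℤ) ^ q) := by
    rw [← ((relCy m).zpow_left ((2:ℤ) ^ q)).eq, mul_inv_cancel_right]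
  have key : cM m ^ ((2:ℤ) ^ q) = ⁅gX m ^ ((2:ℤ) ^ q), gY m⁆ := by
    calc cM m ^ ((2:ℤ) ^ q) = gY m * cM m ^ ((2:ℤ) ^ q) * (gY m)⁻¹ := h2.symm
      _ = (gY m * cM m ^ ((2:ℤ) ^ q)) * (gY m)⁻¹ := by group
      _ = (gX m ^ ((2:ℤ) ^ q) * gY m * gX m ^ (-((2:ℤ) ^ q))) * (gY m)⁻¹ := by rw [← h]
      _ = ⁅gX m ^ ((2:ℤ) ^ q), gY m⁆ := by rw [commutatorElement_def]; group
  rw [key]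
  exact Subgroup.commutator_mem_commutator (xpow_mem m q) (Subgroup.mem_top _)

lemma cM_mem_lcs (hodd : Odd m) (n : ℕ) : cM m ∈ (⊤ : Subgroup (GammaM m)).lowerCentralSeries n := by
  cases n with
  | zero => exact Subgroup.mem_top _
  | succ q =>
      have hcop : IsCoprime ((2:ℤ) ^ q) ((m:ℤ) ^ 2) := by
        rw [Int.isCoprime_iff_gcd_eq_one,
          show ((2:ℤ)) ^ q = ((2 ^ q : ℕ) : ℤ) by push_cast; ring,
          show ((m:ℤ)) ^ 2 = ((m ^ 2 : ℕ) : ℤ) by push_cast; ring,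
          Int.gcd_natCast_natCast]
        exact (Nat.coprime_two_left.mpr hodd).pow q 2
      obtain ⟨u, v, huv⟩ := hcop
      have hm2 : cM m ^ ((m:ℤ) ^ 2) = 1 := by
        rw [show ((m:ℤ)) ^ 2 = ((m ^ 2 : ℕ) : ℤ) by push_cast; ring, zpow_natCast, relC_pow]
      have h1 : cM m = (cM m ^ ((2:ℤ) ^ q)) ^ u * (cM m ^ ((m:ℤ) ^ 2)) ^ v := by
        rw [← zpow_mul, ← zpow_mul, ← zpow_add,
          show (2:ℤ) ^ q * u + (m:ℤ) ^ 2 * v = 1 by linarith, zpow_one]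
      rw [h1, hm2, one_zpow, mul_one]
      exact Subgroup.zpow_mem _ (cpow_mem m q) u

end GammaFacts

/-! Homomorphism to QZ -/

def fQ : Gen → QZ
  | Gen.x => ⟨1, 0, 0⟩
  | Gen.y => ⟨0, 1, 0⟩
  | Gen.t => ⟨0, 0, 1⟩

lemma QZ_comm_xy : ⁅(⟨1, 0, 0⟩ : QZ), (⟨0, 1, 0⟩ : QZ)⁆ = 1 := by
  apply commutatorElement_eq_one_iff_commute.mpr
  show _ = _
  ext <;> simp

lemma fQ_rels (m : ℕ) : ∀ r ∈ gammaRelsM m, FreeGroup.lift fQ r = 1 := by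
  intro r hr
  simp only [gammaRelsM, Set.mem_insert_iff, Set.mem_singleton_iff] at hr
  rcases hr with rfl | rfl | rfl | rfl | rfl
  · rw [map_pow, map_commutatorElement, FreeGroup.lift_apply_of, FreeGroup.lift_apply_of]
    show ⁅fQ Gen.x, fQ Gen.y⁆ ^ m ^ 2 = 1
    rw [show fQ Gen.x = (⟨1,0,0⟩ : QZ) from rfl, show fQ Gen.y = (⟨0,1,0⟩ : QZ) from rfl,
      QZ_comm_xy, one_pow]
  · rw [map_commutatorElement, map_commutatorElement, FreeGroup.lift_apply_of, FreeGroup.lift_apply_of]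
    rw [show fQ Gen.x = (⟨1,0,0⟩ : QZ) from rfl, show fQ Gen.y = (⟨0,1,0⟩ : QZ) from rfl,
      QZ_comm_xy]
    exact commutatorElement_one_left _
  · rw [map_commutatorElement, map_commutatorElement, FreeGroup.lift_apply_of, FreeGroup.lift_apply_of]
    rw [show fQ Gen.x = (⟨1,0,0⟩ : QZ) from rfl, show fQ Gen.y = (⟨0,1,0⟩ : QZ) from rfl,
      QZ_comm_xy]
    exact commutatorElement_one_left _
  · simp only [map_mul, map_inv, FreeGroup.lift_apply_of]
    show fQ Gen.t * fQ Gen.x * (fQ Gen.t)⁻¹ * fQ Gen.x = 1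
    ext <;> simp [fQ]
  · simp only [map_mul, map_inv, FreeGroup.lift_apply_of]
    show fQ Gen.t * fQ Gen.y * (fQ Gen.t)⁻¹ * fQ Gen.y = 1
    ext <;> simp [fQ]

def rhoQ (m : ℕ) : GammaM m →* QZ := PresentedGroup.toGroup (fQ_rels m)

def mXQ : Multiplicative ℤ →* QZ where
  toFun a := ⟨a.toAdd, 0, 0⟩
  map_one' := by ext <;> simp
  map_mul' a b := by ext <;> simp

def mYQ : Multiplicative ℤ →* QZ where
  toFun a := ⟨0, a.toAdd, 0⟩
  map_one' := by ext <;> simp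
  map_mul' a b := by ext <;> simp

def mTQ : Multiplicative ℤ →* QZ where
  toFun a := ⟨0, 0, a.toAdd⟩
  map_one' := by ext <;> simp
  map_mul' a b := by ext <;> simp [epsZ]

lemma ofAdd_one_zpow (A : ℤ) : (Multiplicative.ofAdd (1:ℤ)) ^ A = Multiplicative.ofAdd A := by
  apply Multiplicative.toAdd.injective
  rw [toAdd_zpow]
  simp

lemma XQ_zpow (A : ℤ) : (⟨1, 0, 0⟩ : QZ) ^ A = ⟨A, 0, 0⟩ := by
  rw [show (⟨1,0,0⟩ : QZ) = mXQ (Multiplicative.ofAdd 1) from rfl, ← map_zpow,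
    ofAdd_one_zpow]
  rfl

lemma YQ_zpow (B : ℤ) : (⟨0, 1, 0⟩ : QZ) ^ B = ⟨0, B, 0⟩ := by
  rw [show (⟨0,1,0⟩ : QZ) = mYQ (Multiplicative.ofAdd 1) from rfl, ← map_zpow,
    ofAdd_one_zpow]
  rfl

lemma TQ_zpow (D : ℤ) : (⟨0, 0, 1⟩ : QZ) ^ D = ⟨0, 0, D⟩ := by
  rw [show (⟨0,0,1⟩ : QZ) = mTQ (Multiplicative.ofAdd 1) from rfl, ← map_zpow,
    ofAdd_one_zpow]
  rfl

namespace GammaFacts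
variable (m : ℕ)

lemma rhoQ_x : rhoQ m (gX m) = ⟨1, 0, 0⟩ := PresentedGroup.toGroup.of _
lemma rhoQ_y : rhoQ m (gY m) = ⟨0, 1, 0⟩ := PresentedGroup.toGroup.of _
lemma rhoQ_t : rhoQ m (gT m) = ⟨0, 0, 1⟩ := PresentedGroup.toGroup.of _

lemma rhoQ_c : rhoQ m (cM m) = 1 := by
  rw [cM_def, map_commutatorElement, rhoQ_x, rhoQ_y, QZ_comm_xy]

lemma rhoQ_nf (A B Γ D : ℤ) :
    rhoQ m (gX m ^ A * gY m ^ B * cM m ^ Γ * gT m ^ D) = ⟨A, B, D⟩ := by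
  simp only [map_mul, map_zpow, rhoQ_x, rhoQ_y, rhoQ_t, rhoQ_c, one_zpow, mul_one,
    XQ_zpow, YQ_zpow, TQ_zpow]
  ext <;> simp

end GammaFacts

/-! Lower central series bound in QZ -/

def MQ (n : ℕ) : Subgroup QZ where
  carrier := {g | g.d = 0 ∧ ((2:ℤ) ^ n ∣ g.a) ∧ ((2:ℤ) ^ n ∣ g.b)}
  one_mem' := ⟨rfl, dvd_zero _, dvd_zero _⟩
  mul_mem' := by
    rintro g h ⟨hd, ha, hb⟩ ⟨hd', ha', hb'⟩
    refine ⟨by simp [hd, hd'], ?_, ?_⟩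
    · simp only [QZ.mul_a]; exact dvd_add ha (ha'.mul_left _)
    · simp only [QZ.mul_b]; exact dvd_add hb (hb'.mul_left _)
  inv_mem' := by
    rintro g ⟨hd, ha, hb⟩
    refine ⟨by simp [hd], ?_, ?_⟩
    · simp only [QZ.inv_a]; exact (dvd_neg.mpr (ha.mul_left _))
    · simp only [QZ.inv_b]; exact (dvd_neg.mpr (hb.mul_left _))

lemma mem_MQ {n : ℕ} {g : QZ} :
    g ∈ MQ n ↔ g.d = 0 ∧ ((2:ℤ) ^ n ∣ g.a) ∧ ((2:ℤ) ^ n ∣ g.b) := Iff.rfl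

lemma QZ_comm_comp (g h : QZ) (hd : g.d = 0) :
    ⁅g, h⁆ = ⟨(1 - epsZ h.d) * g.a, (1 - epsZ h.d) * g.b, 0⟩ := by
  rcases epsZ_cases h.d with hε | hε <;>
    · ext <;> simp [commutatorElement_def, hd, epsZ_add, hε] <;> ring

lemma lcs_QZ_le (n : ℕ) : (⊤ : Subgroup QZ).lowerCentralSeries (n + 1) ≤ MQ n := by
  induction n with
  | zero =>
      show ⁅(⊤ : Subgroup QZ).lowerCentralSeries 0, ⊤⁆ ≤ MQ 0
      rw [Subgroup.commutator_le]
      intro g _ h _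
      refine ⟨?_, by simp, by simp⟩
      simp only [commutatorElement_def, QZ.mul_d, QZ.inv_d]
      omega
  | succ n ih =>
      have hstep : (⊤ : Subgroup QZ).lowerCentralSeries (n + 2) = ⁅(⊤ : Subgroup QZ).lowerCentralSeries (n + 1), ⊤⁆ := rfl
      rw [hstep, Subgroup.commutator_le]
      intro g hg h _
      obtain ⟨hd, ha, hb⟩ := ih hg
      rw [QZ_comm_comp g h hd]
      rcases epsZ_cases h.d with hε | hε <;> rw [mem_MQ, hε]
      · exact ⟨rfl, by simp, by simp⟩
      · refine ⟨rfl, ?_, ?_⟩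
        · show (2:ℤ) ^ (n+1) ∣ (1 - (-1)) * g.a
          rw [show ((1:ℤ) - (-1)) = 2 by norm_num, pow_succ']
          exact mul_dvd_mul_left 2 ha
        · show (2:ℤ) ^ (n+1) ∣ (1 - (-1)) * g.b
          rw [show ((1:ℤ) - (-1)) = 2 by norm_num, pow_succ']
          exact mul_dvd_mul_left 2 hb

/-! Homomorphism to HZ (m^2) and the order of cM -/

def fH (m : ℕ) : Gen → HZ (m ^ 2)
  | Gen.x => ⟨1, 0, 0, 1⟩
  | Gen.y => ⟨0, 1, 0, 1⟩
  | Gen.t => ⟨0, 0, 0, -1⟩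

lemma HZ_comm_xy (n : ℕ) : ⁅(⟨1,0,0,1⟩ : HZ n), (⟨0,1,0,1⟩ : HZ n)⁆ = ⟨0,0,1,1⟩ := by
  ext <;> simp [commutatorElement_def]

lemma HZ_central (n : ℕ) (z : ZMod n) (g : HZ n) : Commute (⟨0,0,z,1⟩ : HZ n) g := by
  show _ = _
  ext <;> simp [add_comm]

lemma HZ_pow_central (n k : ℕ) : (⟨0,0,1,1⟩ : HZ n) ^ k = ⟨0,0,(k : ZMod n),1⟩ := by
  have h1 : (⟨0,0,1,1⟩ : HZ n) = HZ.zeta n (Multiplicative.ofAdd 1) := rfl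
  rw [h1, ← map_pow]
  have h2 : (Multiplicative.ofAdd (1 : ZMod n)) ^ k = Multiplicative.ofAdd ((k : ZMod n)) := by
    apply Multiplicative.toAdd.injective
    rw [toAdd_pow]
    simp
  rw [h2]
  rfl

lemma fH_rels (m : ℕ) : ∀ r ∈ gammaRelsM m, FreeGroup.lift (fH m) r = 1 := by
  intro r hr
  simp only [gammaRelsM, Set.mem_insert_iff, Set.mem_singleton_iff] at hr
  rcases hr with rfl | rfl | rfl | rfl | rfl
  · rw [map_pow, map_commutatorElement, FreeGroup.lift_apply_of, FreeGroup.lift_apply_of,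
      show fH m Gen.x = (⟨1,0,0,1⟩ : HZ (m^2)) from rfl,
      show fH m Gen.y = (⟨0,1,0,1⟩ : HZ (m^2)) from rfl, HZ_comm_xy, HZ_pow_central]
    ext <;> simp [ZMod.natCast_self]
  · rw [map_commutatorElement, map_commutatorElement, FreeGroup.lift_apply_of, FreeGroup.lift_apply_of,
      show fH m Gen.x = (⟨1,0,0,1⟩ : HZ (m^2)) from rfl,
      show fH m Gen.y = (⟨0,1,0,1⟩ : HZ (m^2)) from rfl, HZ_comm_xy]
    exact commutatorElement_eq_one_iff_commute.mpr (HZ_central _ 1 _)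
  · rw [map_commutatorElement, map_commutatorElement, FreeGroup.lift_apply_of, FreeGroup.lift_apply_of,
      show fH m Gen.x = (⟨1,0,0,1⟩ : HZ (m^2)) from rfl,
      show fH m Gen.y = (⟨0,1,0,1⟩ : HZ (m^2)) from rfl, HZ_comm_xy]
    exact commutatorElement_eq_one_iff_commute.mpr (HZ_central _ 1 _)
  · simp only [map_mul, map_inv, FreeGroup.lift_apply_of]
    show fH m Gen.t * fH m Gen.x * (fH m Gen.t)⁻¹ * fH m Gen.x = 1
    ext <;> simp [fH, evU]
  · simp only [map_mul, map_inv, FreeGroup.lift_apply_of]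
    show fH m Gen.t * fH m Gen.y * (fH m Gen.t)⁻¹ * fH m Gen.y = 1
    ext <;> simp [fH, evU]

def rhoH (m : ℕ) : GammaM m →* HZ (m ^ 2) := PresentedGroup.toGroup (fH_rels m)

namespace GammaFacts

lemma orderOf_cM (m : ℕ) : orderOf (cM m) = m ^ 2 := by
  have hdvd1 : orderOf (cM m) ∣ m ^ 2 := orderOf_dvd_of_pow_eq_one (relC_pow m)
  have him : rhoH m (cM m) = (⟨0,0,1,1⟩ : HZ (m ^ 2)) := by
    rw [cM_def, map_commutatorElement,
      show rhoH m (gX m) = fH m Gen.x from PresentedGroup.toGroup.of _,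
      show rhoH m (gY m) = fH m Gen.y from PresentedGroup.toGroup.of _]
    exact HZ_comm_xy (m ^ 2)
  have hdvd2 : m ^ 2 ∣ orderOf (cM m) := by
    have h := orderOf_map_dvd (rhoH m) (cM m)
    rwa [him, HZ.orderOf_central] at h
  exact Nat.dvd_antisymm hdvd1 hdvd2

end GammaFacts

/-- In `Γ_{2k-1}`, the element `⁅x,y⁆` lies in the `ω`-term `⋂ₙ Gₙ` of the lower
central series; moreover the `ω`-term equals the central cyclic subgroup of order
`(2k-1)²` generated by `⁅x,y⁆`, and the `(ω+1)`-term `[G, G_ω]` is trivial. -/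
theorem stmt_6 (k : ℕ) (hk : 1 ≤ k) :
    cM (2 * k - 1) ∈ (⨅ n : ℕ, (⊤ : Subgroup (GammaM (2 * k - 1))).lowerCentralSeries n) ∧
    (⨅ n : ℕ, (⊤ : Subgroup (GammaM (2 * k - 1))).lowerCentralSeries n) =
      Subgroup.zpowers (cM (2 * k - 1)) ∧
    cM (2 * k - 1) ∈ Subgroup.center (GammaM (2 * k - 1)) ∧
    orderOf (cM (2 * k - 1)) = (2 * k - 1) ^ 2 ∧
    ⁅(⊤ : Subgroup (GammaM (2 * k - 1))), Subgroup.zpowers (cM (2 * k - 1))⁆ = ⊥ := by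
  have hodd : Odd (2 * k - 1) := by
    rw [Nat.odd_iff]; omega
  have h1 : cM (2 * k - 1) ∈ ⨅ n : ℕ, (⊤ : Subgroup (GammaM (2 * k - 1))).lowerCentralSeries n :=
    Subgroup.mem_iInf.mpr (fun n => GammaFacts.cM_mem_lcs _ hodd n)
  have hcenter := GammaFacts.cM_mem_center (2 * k - 1)
  have hle : (⨅ n : ℕ, (⊤ : Subgroup (GammaM (2 * k - 1))).lowerCentralSeries n)
      ≤ Subgroup.zpowers (cM (2 * k - 1)) := by
    intro g hg
    obtain ⟨A, B, Γ, D, rfl⟩ := GammaFacts.normal_form _ g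
    have hQ : ∀ n : ℕ, (⟨A, B, D⟩ : QZ) ∈ (⊤ : Subgroup QZ).lowerCentralSeries n := by
      intro n
      have h := Subgroup.lowerCentralSeries.map (rhoQ _) n
        (Subgroup.mem_map_of_mem (rhoQ _) (Subgroup.mem_iInf.mp hg n))
      rwa [GammaFacts.rhoQ_nf] at h
    have hD : D = 0 := (lcs_QZ_le 0 (hQ 1)).1
    have hA : A = 0 := int_zero_of_two_pow_dvd (fun n => (lcs_QZ_le n (hQ (n+1))).2.1)
    have hB : B = 0 := int_zero_of_two_pow_dvd (fun n => (lcs_QZ_le n (hQ (n+1))).2.2)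
    subst hA; subst hB; subst hD
    exact Subgroup.mem_zpowers_iff.mpr ⟨Γ, by simp⟩
  refine ⟨h1, le_antisymm hle (Subgroup.zpowers_le.mpr h1), hcenter,
    GammaFacts.orderOf_cM _, ?_⟩
  apply le_bot_iff.mp
  apply Subgroup.commutator_le.mpr
  intro g _ h hh
  rw [Subgroup.mem_bot]
  obtain ⟨j, rfl⟩ := Subgroup.mem_zpowers_iff.mp hh
  have hc : Commute g (cM (2 * k - 1)) := Subgroup.mem_center_iff.mp hcenter g
  exact commutatorElement_eq_one_iff_commute.mpr (hc.zpow_right j)
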